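/- Let κ and α be infinite cardinals. Then: (a) if κ ≥ α⁺ then w((2^α)_κ) = 2^α; and (b) if κ ≤ α⁺ then w((2^α)_κ) = α^{<κ}. -/

import Mathlib

open Cardinal TopologicalSpace Set

universe u

/-- The `κ`-box topology on a product of topological spaces: generated by the boxes
`Π i, U i` with each `U i` open and fewer than `κ` coordinates restricted. -/
def boxTopology (κ : Cardinal.{u}) {ι : Type u} (X : ι → Type u)
    [∀ i, TopologicalSpace (X i)] : TopologicalSpace (∀ i, X i) :=
  TopologicalSpace.generateFrom
    {S | ∃ U : ∀ i, Set (X i), (∀ i, IsOpen (U i)) ∧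
      #{i | U i ≠ Set.univ} < κ ∧ S = Set.pi Set.univ U}

/-- The weight of a topological space: the least cardinality of a topological base
(finite values allowed). -/
noncomputable def wt (X : Type u) [TopologicalSpace X] : Cardinal.{u} :=
  sInf {c | ∃ B : Set (Set X), IsTopologicalBasis B ∧ #B = c}

/-! ### Auxiliary lemmas -/

/-- The generating family of boxes. -/
def boxGen (κ : Cardinal.{u}) (A : Type u) : Set (Set (∀ _ : A, ULift.{u} Bool)) :=
  {S | ∃ U : ∀ _ : A, Set (ULift.{u} Bool), (∀ i, IsOpen (U i)) ∧
      #{i | U i ≠ Set.univ} < κ ∧ S = Set.pi Set.univ U}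

theorem boxGen_basis (κ : Cardinal.{u}) (hκ : ℵ₀ ≤ κ) (A : Type u) :
    @IsTopologicalBasis _ (boxTopology κ fun _ : A => ULift.{u} Bool) (boxGen κ A) := by
  letI := boxTopology κ (fun _ : A => ULift.{u} Bool)
  refine ⟨?_, ?_, rfl⟩
  · rintro t₁ ⟨U, hU, hUκ, rfl⟩ t₂ ⟨V, hV, hVκ, rfl⟩ x hx
    refine ⟨_, ⟨fun i => U i ∩ V i, fun i => (hU i).inter (hV i), ?_, rfl⟩, ?_, ?_⟩
    · have hsub : {i | U i ∩ V i ≠ Set.univ} ⊆ {i | U i ≠ Set.univ} ∪ {i | V i ≠ Set.univ} := by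
        intro i hi
        by_contra hcon
        simp only [mem_union, mem_setOf_eq, not_or, not_not] at hcon
        exact hi (by simp [hcon.1, hcon.2])
      exact lt_of_le_of_lt (mk_le_mk_of_subset hsub)
        (lt_of_le_of_lt (mk_union_le _ _) (Cardinal.add_lt_of_lt hκ hUκ hVκ))
    · rw [pi_inter_distrib]; exact hx
    · rw [pi_inter_distrib]
  · apply eq_univ_of_univ_subset
    intro x _
    exact mem_sUnion.2 ⟨univ, ⟨fun _ => univ, fun _ => isOpen_univ,
      by simpa using aleph0_pos.trans_le hκ, by simp⟩, mem_univ x⟩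

theorem mk_bounded_set_lt (X : Type u) [Infinite X] (κ : Cardinal.{u}) :
    #{t : Set X // #t < κ} ≤ κ * (#X ^< κ) := by
  classical
  let e := (Ordinal.ToType.mk (o := κ.ord))
  let g : {t : Set X // #t < κ} →
      Σ ξ : κ.ord.ToType, {t : Set X // #t ≤ ((e.symm ξ : Ordinal)).card} :=
    fun t => ⟨e ⟨(#t.1).ord, by rw [Set.mem_Iio, Cardinal.ord_lt_ord]; exact t.2⟩,
      t.1, by simp [e]⟩
  have hg : Function.Injective g := by
    intro t t' h
    exact Subtype.ext (congrArg (fun p => (p.2.1 : Set X)) h)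
  calc #{t : Set X // #t < κ}
      ≤ #(Σ ξ : κ.ord.ToType, {t : Set X // #t ≤ ((e.symm ξ : Ordinal)).card}) :=
        mk_le_of_injective hg
    _ = Cardinal.sum (fun ξ : κ.ord.ToType =>
          #{t : Set X // #t ≤ ((e.symm ξ : Ordinal)).card}) := mk_sigma _
    _ ≤ Cardinal.sum (fun _ : κ.ord.ToType => #X ^< κ) := by
        apply Cardinal.sum_le_sum
        intro ξ
        refine (mk_bounded_set_le_of_infinite X _).trans ?_
        apply le_powerlt
        rw [← Cardinal.lt_ord]
        exact (e.symm ξ).2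
    _ = κ * (#X ^< κ) := by
        rw [Cardinal.sum_const']
        rw [Cardinal.mk_toType, Cardinal.card_ord]

theorem mk_boxGen_le (κ : Cardinal.{u}) (A : Type u) :
    #(boxGen κ A) ≤ #{t : Set (A × Set (ULift.{u} Bool)) // #t < κ} := by
  classical
  have key : ∀ S : boxGen κ A, ∃ U : ∀ _ : A, Set (ULift.{u} Bool),
      #{i | U i ≠ Set.univ} < κ ∧ (S : Set _) = Set.pi Set.univ U :=
    fun S => ⟨S.2.choose, S.2.choose_spec.2.1, S.2.choose_spec.2.2⟩
  choose U hUκ hUS using key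
  let f : boxGen κ A → {t : Set (A × Set (ULift.{u} Bool)) // #t < κ} :=
    fun S => ⟨{p | U S p.1 = p.2 ∧ p.2 ≠ Set.univ}, by
      have : Function.Injective (fun p : {p : A × Set (ULift.{u} Bool) //
          U S p.1 = p.2 ∧ p.2 ≠ Set.univ} =>
            (⟨p.1.1, fun hc => p.2.2 (p.2.1 ▸ hc)⟩ : {i | U S i ≠ Set.univ})) := by
        rintro ⟨⟨a, s⟩, h1, h2⟩ ⟨⟨a', s'⟩, h1', h2'⟩ h
        simp only [Subtype.mk.injEq] at h
        subst h
        dsimp at h1 h1'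
        apply Subtype.ext
        simp only [Prod.mk.injEq]
        exact ⟨trivial, h1.symm.trans h1'⟩
      exact lt_of_le_of_lt (mk_le_of_injective this) (hUκ S)⟩
  have hf : Function.Injective f := by
    intro S S' h
    have hU : U S = U S' := by
      funext i
      by_cases hi : U S i = Set.univ
      · by_contra hne
        have hi' : U S' i ≠ Set.univ := fun hu => hne (hi.trans hu.symm)
        have : (i, U S' i) ∈ {p : A × Set (ULift.{u} Bool) | U S p.1 = p.2 ∧ p.2 ≠ Set.univ} := by
          have := congrArg Subtype.val h
          simp only [f] at this
          rw [this]
          exact ⟨rfl, hi'⟩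
        have h1 : U S i = U S' i := this.1
        exact hi' (h1 ▸ hi)
      · have : (i, U S i) ∈ {p : A × Set (ULift.{u} Bool) | U S' p.1 = p.2 ∧ p.2 ≠ Set.univ} := by
          have := congrArg Subtype.val h
          simp only [f] at this
          rw [← this]
          exact ⟨rfl, hi⟩
        exact this.1.symm
    apply Subtype.ext
    rw [hUS S, hUS S', hU]
  exact mk_le_of_injective hf

theorem stmt3 (α κ : Cardinal.{u}) (hα : ℵ₀ ≤ α) (hκ : ℵ₀ ≤ κ)
    (A : Type u) (hA : #A = α) :
    (Order.succ α ≤ κ →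
      @wt (∀ _ : A, ULift.{u} Bool) (boxTopology κ fun _ => ULift.{u} Bool) = 2 ^ α) ∧
    (κ ≤ Order.succ α →
      @wt (∀ _ : A, ULift.{u} Bool) (boxTopology κ fun _ => ULift.{u} Bool) = α ^< κ) := by
  classical
  letI T := boxTopology κ (fun _ : A => ULift.{u} Bool)
  have hXcard : #(∀ _ : A, ULift.{u} Bool) = 2 ^ α := by
    rw [← hA, ← Cardinal.power_def]
    congr 1
    simp
  constructor
  · -- part (a)
    intro hsucc
    have hαlt : α < κ := lt_of_lt_of_le (Order.lt_succ α) hsucc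
    have hsing : ∀ x : (∀ _ : A, ULift.{u} Bool), IsOpen ({x} : Set _) := by
      intro x
      rw [← Set.univ_pi_singleton x]
      exact isOpen_generateFrom_of_mem ⟨fun i => {x i}, fun _ => isOpen_discrete _,
        lt_of_le_of_lt (by simpa [hA] using mk_subtype_le (fun i : A => ({x i} : Set _) ≠ univ))
          hαlt, rfl⟩
    haveI : DiscreteTopology (∀ _ : A, ULift.{u} Bool) := discreteTopology_iff_isOpen_singleton.mpr hsing
    have hsingset : ({s : Set (∀ _ : A, ULift.{u} Bool) | ∃ x, s = {x}})
        = Set.range (fun x : (∀ _ : A, ULift.{u} Bool) => ({x} : Set _)) := by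
      ext s; simp [eq_comm]
    have hscard : #({s : Set (∀ _ : A, ULift.{u} Bool) | ∃ x, s = {x}}) = 2 ^ α := by
      rw [hsingset, mk_range_eq _ (fun a b hab => singleton_eq_singleton_iff.1 hab), hXcard]
    apply le_antisymm
    · exact csInf_le' ⟨_, isTopologicalBasis_singletons _, hscard⟩
    · refine le_csInf ⟨_, _, isTopologicalBasis_singletons _, rfl⟩ ?_
      rintro c ⟨B, hB, rfl⟩
      rw [← hXcard]
      have : ∀ x : (∀ _ : A, ULift.{u} Bool), ∃ b ∈ B, x ∈ b ∧ b ⊆ {x} :=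
        fun x => hB.exists_subset_of_mem_open (mem_singleton x) (hsing x)
      choose b hbB hxb hbx using this
      have hbeq : ∀ x, b x = {x} :=
        fun x => le_antisymm (hbx x) (singleton_subset_iff.2 (hxb x))
      have : Function.Injective (fun x => (⟨b x, hbB x⟩ : B)) := by
        intro x y hxy
        have : ({x} : Set _) = {y} := by
          rw [← hbeq x, ← hbeq y]; exact congrArg Subtype.val hxy
        exact singleton_eq_singleton_iff.1 this
      exact mk_le_of_injective this
  · -- part (b)
    intro hle
    have hone : (1 : Cardinal) < κ := lt_of_lt_of_le one_lt_aleph0 hκ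
    have hαpow : α ≤ α ^< κ := by
      have := le_powerlt (b := κ) α hone
      rwa [power_one] at this
    have hpowinf : ℵ₀ ≤ α ^< κ := hα.trans hαpow
    have hκpow : κ ≤ α ^< κ := by
      rcases lt_or_eq_of_le hle with hlt | heq
      · exact (Order.lt_succ_iff.1 hlt).trans hαpow
      · rw [heq, powerlt_succ (aleph0_pos.trans_le hα).ne']
        calc Order.succ α ≤ 2 ^ α := Order.succ_le_iff.2 (cantor α)
          _ ≤ α ^ α := power_le_power_right (by exact_mod_cast (nat_lt_aleph0 2).le.trans hα)
    have hbasis := boxGen_basis κ hκ A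
    apply le_antisymm
    · refine le_trans (csInf_le' ⟨boxGen κ A, hbasis, rfl⟩) ?_
      haveI : Infinite A := Cardinal.infinite_iff.2 (hA ▸ hα)
      haveI : Infinite (A × Set (ULift.{u} Bool)) := Prod.infinite_of_left
      refine le_trans (mk_boxGen_le κ A) (le_trans (mk_bounded_set_lt _ κ) ?_)
      have hX : #(A × Set (ULift.{u} Bool)) = α := by
        rw [mk_prod, lift_id, lift_id, hA, mk_set]
        have h4 : #(ULift.{u} Bool) = 2 := by simp
        rw [h4]
        have h2 : (2 : Cardinal.{u}) < ℵ₀ := by exact_mod_cast nat_lt_aleph0 2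
        exact mul_eq_left hα ((power_lt_aleph0 h2 h2).le.trans hα)
          (power_ne_zero _ (by exact_mod_cast Nat.succ_ne_zero 1))
      rw [hX]
      calc κ * (α ^< κ) ≤ (α ^< κ) * (α ^< κ) := _root_.mul_le_mul_left hκpow _
        _ = α ^< κ := mul_eq_self hpowinf
    · refine le_csInf ⟨_, boxGen κ A, hbasis, rfl⟩ ?_
      rintro c ⟨B, hB, rfl⟩
      rw [powerlt_le]
      intro x hx
      have hxα : x ≤ α := Order.lt_succ_iff.1 (hx.trans_le hle)
      have hLA : #(x.out × A) ≤ #A := by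
        rw [mk_prod, lift_id, lift_id, mk_out, hA]
        calc x * α ≤ α * α := _root_.mul_le_mul_left hxα α
          _ = α := mul_eq_self hα
      obtain ⟨e⟩ := Cardinal.le_def _ _ |>.1 hLA
      set S : (x.out → A) → Set A := fun f => Set.range (fun ξ => e (ξ, f ξ)) with hS
      set p : (x.out → A) → (∀ _ : A, ULift.{u} Bool) :=
        fun f i => if i ∈ S f then ULift.up true else ULift.up false with hp
      set Ub : (x.out → A) → Set (∀ _ : A, ULift.{u} Bool) :=
        fun f => Set.pi Set.univ
          (fun i => if i ∈ S f then ({ULift.up true} : Set (ULift.{u} Bool)) else univ) with hUb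
      have hSmall : ∀ f, #(S f) < κ := by
        intro f
        exact lt_of_le_of_lt (mk_range_le.trans (by rw [mk_out])) hx
      have hopen : ∀ f, IsOpen (Ub f) := by
        intro f
        refine isOpen_generateFrom_of_mem ⟨_, fun _ => isOpen_discrete _, ?_, rfl⟩
        refine lt_of_le_of_lt (mk_le_mk_of_subset (fun i hi => ?_)) (hSmall f)
        by_contra hiS
        exact hi (by simp [hiS])
      have hmem : ∀ f, p f ∈ Ub f := by
        intro f
        intro i _
        by_cases hi : i ∈ S f <;> simp [hp, hUb, hi]
      have key := fun f => hB.exists_subset_of_mem_open (hmem f) (hopen f)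
      choose b hbB hpb hbU using key
      have hbinj : Function.Injective b := by
        have hSsub : ∀ f g, b f = b g → S g ⊆ S f := by
          intro f g hfg i hi
          have : p f ∈ Ub g := hbU g (hfg ▸ hpb f)
          have := this i (mem_univ i)
          simp only [hi, if_true, mem_singleton_iff] at this
          by_contra hiS
          simp only [hp, hiS, if_false] at this
          exact Bool.false_ne_true (congrArg ULift.down this)
        intro f g hfg
        have hSeq : S f = S g := le_antisymm (hSsub g f hfg.symm) (hSsub f g hfg)
        funext ξ
        have : e (ξ, f ξ) ∈ S g := hSeq ▸ Set.mem_range_self ξ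
        obtain ⟨ξ', hξ'⟩ := this
        have := e.injective hξ'
        simp only [Prod.mk.injEq] at this
        rw [← this.2, this.1]
      have hpow : α ^ x = #(x.out → A) := by
        have h := Cardinal.power_def A (Quotient.out x)
        rw [hA, mk_out] at h
        exact h
      rw [hpow]
      exact mk_le_of_injective (f := fun f => (⟨b f, hbB f⟩ : B))
        (fun f g hfg => hbinj (congrArg Subtype.val hfg))
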